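/- Let 0 < ρ < 1/3, ρ ≤ λ < (1−ρ)/2, E the attractor of {ρx, ρx+λ, ρx+1−ρ}, with φ₁(x)=ρx, φ₂(x)=ρx+λ, φ₃(x)=ρx+1−ρ. If f(x) = rx+t with r ≠ 0 and f(φ₁(E) ∪ φ₂(E)) ⊆ E, then f(φ₁(E) ∪ φ₂(E)) ⊆ φ₁(E) ∪ φ₂(E) or f(φ₁(E) ∪ φ₂(E)) ⊆ φ₃(E). -/

import Mathlib

lemma gap_le {ρ lam : ℝ} {E : Set ℝ}
    (hρ0 : 0 < ρ) (hρ3 : ρ < 1 / 3) (hl1 : ρ ≤ lam) (hl2 : lam < (1 - ρ) / 2)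
    (hE : E = (fun x : ℝ => ρ * x) '' E ∪ (fun x : ℝ => ρ * x + lam) '' E ∪
        (fun x : ℝ => ρ * x + (1 - ρ)) '' E)
    (h0 : (0:ℝ) ∈ E) (h1 : (1:ℝ) ∈ E) :
    ∀ u v : ℝ, 0 ≤ u → v ≤ 1 → E ∩ Set.Ioo u v = ∅ → v - u ≤ 1 - 2*ρ - lam := by
  have hρ1 : ρ < 1 := by linarith
  have hgpos : 0 < 1 - 2*ρ - lam := by nlinarith
  have hm1 : ∀ x ∈ E, ρ * x ∈ E := by
    intro x hx; rw [hE]; exact Or.inl (Or.inl ⟨x, hx, rfl⟩)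
  have hm2 : ∀ x ∈ E, ρ * x + lam ∈ E := by
    intro x hx; rw [hE]; exact Or.inl (Or.inr ⟨x, hx, rfl⟩)
  have hm3 : ∀ x ∈ E, ρ * x + (1 - ρ) ∈ E := by
    intro x hx; rw [hE]; exact Or.inr ⟨x, hx, rfl⟩
  have hρE : ρ ∈ E := by have := hm1 1 h1; simpa using this
  have hlE : lam ∈ E := by have := hm2 0 h0; simpa using this
  have hlρE : ρ * 1 + lam ∈ E := hm2 1 h1
  have h1ρE : ρ * 0 + (1 - ρ) ∈ E := hm3 0 h0
  set S : Set ℝ := {d | ∃ u v : ℝ, 0 ≤ u ∧ v ≤ 1 ∧ d = v - u ∧ E ∩ Set.Ioo u v = ∅} with hS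
  have hS0 : (0:ℝ) ∈ S := ⟨0, 0, le_refl _, by norm_num, by ring, by simp⟩
  have hSbdd : BddAbove S := by
    refine ⟨1, ?_⟩
    rintro d ⟨u, v, hu, hv, rfl, -⟩
    linarith
  set g : ℝ := sSup S with hg
  have hgS : ∀ d ∈ S, d ≤ g := fun d hd => le_csSup hSbdd hd
  -- key bound on elements of S
  have hkey : ∀ d ∈ S, d ≤ max (1 - 2*ρ - lam) (ρ * g) := by
    rintro d ⟨u, v, hu, hv, rfl, hempty⟩
    have hgnn : 0 ≤ g := hgS 0 hS0
    rcases le_or_gt v u with huv | huv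
    · exact le_trans (by linarith) (le_max_left _ _)
    have hnot : ∀ x ∈ E, ¬ (u < x ∧ x < v) := by
      intro x hx hxx
      have : x ∈ E ∩ Set.Ioo u v := ⟨hx, hxx.1, hxx.2⟩
      rw [hempty] at this; exact this
    -- position of ρ
    have hscale : ∀ c : ℝ, c ≤ u → v ≤ c + ρ → (∀ x ∈ E, ρ * x + c ∈ E) →
        v - u ≤ ρ * g := by
      intro c hcu hvc hmap
      have hmem : (v - c)/ρ - (u - c)/ρ ∈ S := by
        refine ⟨(u - c)/ρ, (v - c)/ρ, ?_, ?_, rfl, ?_⟩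
        · exact div_nonneg (by linarith) hρ0.le
        · rw [div_le_one hρ0]; linarith
        · rw [Set.eq_empty_iff_forall_notMem]
          rintro x ⟨hxE, hx1, hx2⟩
          rw [div_lt_iff₀ hρ0] at hx1
          rw [lt_div_iff₀ hρ0] at hx2
          exact hnot _ (hmap x hxE) ⟨by nlinarith, by nlinarith⟩
      have := hgS _ hmem
      have h2 : (v - c)/ρ - (u - c)/ρ = (v - u)/ρ := by ring
      rw [h2, div_le_iff₀ hρ0] at this
      nlinarith
    have hpos : ∀ p, p ∈ E → v ≤ p ∨ p ≤ u := by
      intro p hp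
      rcases le_or_gt v p with h | h
      · exact Or.inl h
      rcases le_or_gt p u with h' | h'
      · exact Or.inr h'
      · exact absurd ⟨h', h⟩ (hnot p hp)
    rcases hpos ρ hρE with hvρ | hρu
    · -- gap inside [0, ρ]
      have := hscale 0 hu (by linarith) (by intro x hx; simpa using hm1 x hx)
      exact le_trans this (le_max_right _ _)
    rcases hpos lam hlE with hvl | hlu
    · -- gap inside [ρ, lam]
      exact le_trans (by linarith : v - u ≤ 1 - 2*ρ - lam) (le_max_left _ _)
    rcases hpos (lam + ρ) (by simpa [add_comm] using hlρE) with hvl2 | hl2u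
    · have := hscale lam hlu (by linarith) hm2
      exact le_trans this (le_max_right _ _)
    rcases hpos (1 - ρ) (by simpa using h1ρE) with hv1 | h1u
    · -- gap inside [lam+ρ, 1-ρ]
      exact le_trans (by linarith) (le_max_left _ _)
    · have := hscale (1 - ρ) h1u (by linarith) hm3
      exact le_trans this (le_max_right _ _)
  have hgle : g ≤ max (1 - 2*ρ - lam) (ρ * g) := csSup_le ⟨0, hS0⟩ hkey
  have hgfin : g ≤ 1 - 2*ρ - lam := by
    rcases max_cases (1 - 2*ρ - lam) (ρ * g) with ⟨heq, -⟩ | ⟨heq, -⟩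
    · rw [heq] at hgle; exact hgle
    · rw [heq] at hgle
      have hgnn : 0 ≤ g := hgS 0 hS0
      nlinarith
  intro u v hu hv he
  exact le_trans (hgS _ ⟨u, v, hu, hv, rfl, he⟩) hgfin

set_option maxHeartbeats 1000000 in
theorem dichotomy_union (ρ lam r t : ℝ) (E : Set ℝ)
    (hρ0 : 0 < ρ) (hρ3 : ρ < 1 / 3) (hl1 : ρ ≤ lam) (hl2 : lam < (1 - ρ) / 2)
    (hEc : IsCompact E) (hEne : E.Nonempty)
    (hE : E = (fun x : ℝ => ρ * x) '' E ∪ (fun x : ℝ => ρ * x + lam) '' E ∪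
        (fun x : ℝ => ρ * x + (1 - ρ)) '' E)
    (hr : r ≠ 0)
    (hf : (fun x : ℝ => r * x + t) ''
        ((fun x : ℝ => ρ * x) '' E ∪ (fun x : ℝ => ρ * x + lam) '' E) ⊆ E) :
    (fun x : ℝ => r * x + t) ''
        ((fun x : ℝ => ρ * x) '' E ∪ (fun x : ℝ => ρ * x + lam) '' E) ⊆
        (fun x : ℝ => ρ * x) '' E ∪ (fun x : ℝ => ρ * x + lam) '' E ∨
      (fun x : ℝ => r * x + t) ''
        ((fun x : ℝ => ρ * x) '' E ∪ (fun x : ℝ => ρ * x + lam) '' E) ⊆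
        (fun x : ℝ => ρ * x + (1 - ρ)) '' E := by
  have hρ1 : ρ < 1 := by linarith
  have hgpos : 0 < 1 - 2*ρ - lam := by nlinarith
  have hm1 : ∀ x ∈ E, ρ * x ∈ E := by
    intro x hx; rw [hE]; exact Or.inl (Or.inl ⟨x, hx, rfl⟩)
  have hm2 : ∀ x ∈ E, ρ * x + lam ∈ E := by
    intro x hx; rw [hE]; exact Or.inl (Or.inr ⟨x, hx, rfl⟩)
  have hm3 : ∀ x ∈ E, ρ * x + (1 - ρ) ∈ E := by
    intro x hx; rw [hE]; exact Or.inr ⟨x, hx, rfl⟩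
  have hcases : ∀ x ∈ E, (∃ y ∈ E, x = ρ * y) ∨ (∃ y ∈ E, x = ρ * y + lam) ∨
      (∃ y ∈ E, x = ρ * y + (1 - ρ)) := by
    intro x hx
    rw [hE] at hx
    rcases hx with (⟨y, hy, hxy⟩ | ⟨y, hy, hxy⟩) | ⟨y, hy, hxy⟩
    · exact Or.inl ⟨y, hy, hxy.symm⟩
    · exact Or.inr (Or.inl ⟨y, hy, hxy.symm⟩)
    · exact Or.inr (Or.inr ⟨y, hy, hxy.symm⟩)
  -- bounds on E via sInf/sSup
  have hmE : sInf E ∈ E := hEc.sInf_mem hEne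
  have hME : sSup E ∈ E := hEc.sSup_mem hEne
  have hmle : ∀ x ∈ E, sInf E ≤ x := fun x hx => csInf_le hEc.bddBelow hx
  have hMge : ∀ x ∈ E, x ≤ sSup E := fun x hx => le_csSup hEc.bddAbove hx
  have hmnn : 0 ≤ sInf E := by
    rcases hcases _ hmE with ⟨y, hy, hxy⟩ | ⟨y, hy, hxy⟩ | ⟨y, hy, hxy⟩ <;>
      nlinarith [hmle y hy]
  have hMle : sSup E ≤ 1 := by
    rcases hcases _ hME with ⟨y, hy, hxy⟩ | ⟨y, hy, hxy⟩ | ⟨y, hy, hxy⟩ <;>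
      nlinarith [hMge y hy]
  have h0E : (0:ℝ) ∈ E := by
    have h1 : sInf E ≤ ρ * sInf E := hmle _ (hm1 _ hmE)
    have h2 : sInf E = 0 := by nlinarith
    rwa [h2] at hmE
  have h1E : (1:ℝ) ∈ E := by
    have h1 : ρ * sSup E + (1 - ρ) ≤ sSup E := hMge _ (hm3 _ hME)
    have h2 : sSup E = 1 := by nlinarith
    rwa [h2] at hME
  have hE01 : ∀ x ∈ E, 0 ≤ x ∧ x ≤ 1 := fun x hx =>
    ⟨le_trans hmnn (hmle x hx), le_trans (hMge x hx) hMle⟩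
  have hgap := gap_le hρ0 hρ3 hl1 hl2 hE h0E h1E
  -- structure of E relative to the big gap
  have hEloc : ∀ x ∈ E, x ≤ lam + ρ ∨ 1 - ρ ≤ x := by
    intro x hx
    rcases hcases x hx with ⟨y, hy, hxy⟩ | ⟨y, hy, hxy⟩ | ⟨y, hy, hxy⟩
    · left; nlinarith [hE01 y hy]
    · left; nlinarith [hE01 y hy]
    · right; nlinarith [hE01 y hy]
  set A : Set ℝ := (fun x : ℝ => ρ * x) '' E ∪ (fun x : ℝ => ρ * x + lam) '' E with hA
  have hAE : A ⊆ E := by rw [hE]; exact Set.subset_union_left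
  have hAbd : ∀ x ∈ A, 0 ≤ x ∧ x ≤ lam + ρ := by
    rintro x (⟨y, hy, rfl⟩ | ⟨y, hy, rfl⟩) <;>
      constructor <;> simp only [] <;> nlinarith [hE01 y hy]
  have hmemA : ∀ x ∈ E, x ≤ lam + ρ → x ∈ A := by
    intro x hx hxle
    rw [hE] at hx
    rcases hx with hx | ⟨y, hy, hxy⟩
    · exact hx
    · exfalso
      have := (hE01 y hy).1
      simp only [] at hxy
      nlinarith
  have hmemT : ∀ x ∈ E, 1 - ρ ≤ x → x ∈ (fun x : ℝ => ρ * x + (1 - ρ)) '' E := by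
    intro x hx hxge
    rw [hE] at hx
    rcases hx with hx | hx
    · exfalso
      rcases hAbd x hx with ⟨-, h2⟩
      nlinarith
    · exact hx
  -- key elements of A
  have h0A : (0:ℝ) ∈ A := Or.inl ⟨0, h0E, by simp⟩
  have hρA : ρ ∈ A := Or.inl ⟨1, h1E, by simp⟩
  have hlamA : lam ∈ A := Or.inr ⟨0, h0E, by simp⟩
  have hlρA : lam + ρ ∈ A := Or.inr ⟨1, h1E, by simp [add_comm]⟩
  have hfA : ∀ x ∈ A, r * x + t ∈ E := fun x hx => hf ⟨x, hx, rfl⟩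
  -- dichotomy
  by_cases hL : ∀ x ∈ A, r * x + t ≤ lam + ρ
  · left
    rintro y ⟨x, hx, rfl⟩
    exact hmemA _ (hfA x hx) (hL x hx)
  push_neg at hL
  obtain ⟨b, hbA, hb⟩ := hL
  have hfb : 1 - ρ ≤ r * b + t := by
    rcases hEloc _ (hfA b hbA) with h | h
    · exact absurd h (not_le.2 hb)
    · exact h
  by_cases hR : ∀ x ∈ A, 1 - ρ ≤ r * x + t
  · right
    rintro y ⟨x, hx, rfl⟩
    exact hmemT _ (hfA x hx) (hR x hx)
  push_neg at hR
  obtain ⟨a, haA, ha⟩ := hR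
  have hfa : r * a + t ≤ lam + ρ := by
    rcases hEloc _ (hfA a haA) with h | h
    · exact h
    · exact absurd h (not_le.2 ha)
  exfalso
  -- span bound: f(0), f(lam+ρ) ∈ [0,1]
  have hf0 := hE01 _ (hfA 0 h0A)
  have hf1 := hE01 _ (hfA (lam + ρ) hlρA)
  have hfρ := hE01 _ (hfA ρ hρA)
  have hflam := hE01 _ (hfA lam hlamA)
  rcases hr.lt_or_gt with hrneg | hrpos
  · -- r < 0
    obtain ⟨u, hu⟩ : ∃ u : ℝ, u = (1 - ρ - t) / r := ⟨_, rfl⟩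
    obtain ⟨v, hv⟩ : ∃ v : ℝ, v = (lam + ρ - t) / r := ⟨_, rfl⟩
    have hfu : r * u + t = 1 - ρ := by rw [hu]; field_simp; ring
    have hfv : r * v + t = lam + ρ := by rw [hv]; field_simp; ring
    have hvu : v - u = (1 - 2*ρ - lam) / (-r) := by
      rw [hu, hv]; field_simp [hr]; ring
    have huv : u < v := by
      have := div_pos hgpos (neg_pos.2 hrneg)
      linarith [hvu]
    have hbu : b ≤ u := by
      by_contra hub
      push_neg at hub
      have := mul_lt_mul_of_neg_left hub hrneg
      linarith
    have hav : v ≤ a := by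
      by_contra hva
      push_neg at hva
      have := mul_lt_mul_of_neg_left hva hrneg
      linarith
    have hu0 : 0 ≤ u := le_trans (hAbd b hbA).1 hbu
    have hvl : v ≤ lam + ρ := le_trans hav (hAbd a haA).2
    have hempty : E ∩ Set.Ioo u v = ∅ := by
      rw [Set.eq_empty_iff_forall_notMem]
      rintro x ⟨hxE, hx1, hx2⟩
      have hxA : x ∈ A := hmemA x hxE (by linarith)
      have hfx := hEloc _ (hfA x hxA)
      have e1 : r * x + t < 1 - ρ := by
        have := mul_lt_mul_of_neg_left hx1 hrneg
        linarith
      have e2 : lam + ρ < r * x + t := by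
        have := mul_lt_mul_of_neg_left hx2 hrneg
        linarith
      rcases hfx with h | h <;> linarith
    -- position cases
    have hnot : ∀ p ∈ E, v ≤ p ∨ p ≤ u := by
      intro p hp
      rcases le_or_gt v p with h | h
      · exact Or.inl h
      rcases le_or_gt p u with h' | h'
      · exact Or.inr h'
      · exfalso
        have : p ∈ E ∩ Set.Ioo u v := ⟨hp, h', h⟩
        rw [hempty] at this; exact this
    have hρE : ρ ∈ E := hAE hρA
    have hlamE : lam ∈ E := hAE hlamA
    -- scaled-gap bound: if gap sits inside an image interval, -r ≥ 1/ρ, contra span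
    have hbig : ¬ ((-r) * ρ ≥ 1) := by
      intro hbig
      have hspan : (-r) * (lam + ρ) ≤ 1 := by nlinarith [hf0.2, hf1.1]
      nlinarith [mul_nonneg (by linarith : (0:ℝ) ≤ -r) (by linarith : (0:ℝ) ≤ lam - ρ)]
    have hscaled : ∀ c : ℝ, c ≤ u → v ≤ c + ρ → (∀ x ∈ E, ρ * x + c ∈ E) → False := by
      intro c hcu hvc hmap
      have hgap' : v / 1 - u / 1 ≤ ρ * (1 - 2*ρ - lam) := by
        have hEmpty2 : E ∩ Set.Ioo ((u - c)/ρ) ((v - c)/ρ) = ∅ := by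
          rw [Set.eq_empty_iff_forall_notMem]
          rintro x ⟨hxE, hx1, hx2⟩
          rw [div_lt_iff₀ hρ0] at hx1
          rw [lt_div_iff₀ hρ0] at hx2
          have : ρ * x + c ∈ E ∩ Set.Ioo u v :=
            ⟨hmap x hxE, by nlinarith, by nlinarith⟩
          rw [hempty] at this; exact this
        have := hgap ((u - c)/ρ) ((v - c)/ρ)
          (div_nonneg (by linarith) hρ0.le)
          (by rw [div_le_one hρ0]; linarith) hEmpty2
        have h2 : (v - c)/ρ - (u - c)/ρ = (v - u)/ρ := by ring
        rw [h2, div_le_iff₀ hρ0] at this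
        simp only [div_one]
        nlinarith
      simp only [div_one] at hgap'
      rw [hvu, div_le_iff₀ (by linarith : (0:ℝ) < -r)] at hgap'
      -- 1 - 2ρ - lam ≤ ρ(1-2ρ-lam)(-r) ⇒ (-r)ρ ≥ 1
      exact hbig (by nlinarith)
    rcases hnot ρ hρE with hvρ | hρu
    · exact hscaled 0 hu0 (by linarith) (fun x hx => by simpa using hm1 x hx)
    rcases hnot lam hlamE with hvlam | hlamu
    · -- middle gap: -r ≤ 1 and -r > 1
      have hfρ1 : 1 - ρ ≤ r * ρ + t := by
        have := mul_le_mul_of_nonpos_left hρu hrneg.le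
        linarith
      have hs1 : (-r) * ρ ≤ ρ := by nlinarith [hf0.2]
      have hs2 : (-r) * (v - u) = 1 - 2*ρ - lam := by
        rw [hvu]
        field_simp
      have hr1 : -r ≤ 1 := le_of_mul_le_mul_right (by rw [one_mul]; exact hs1) hρ0
      have h3 : v - u ≤ lam - ρ := by linarith
      have h4 : (-r) * (v - u) ≤ (-r) * (lam - ρ) :=
        mul_le_mul_of_nonneg_left h3 (by linarith)
      have h5 : (-r) * (lam - ρ) ≤ 1 * (lam - ρ) :=
        mul_le_mul_of_nonneg_right hr1 (by linarith)
      rw [one_mul] at h5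
      linarith [hs2]
    · exact hscaled lam hlamu (by linarith) hm2
  · -- r > 0
    obtain ⟨u, hu⟩ : ∃ u : ℝ, u = (lam + ρ - t) / r := ⟨_, rfl⟩
    obtain ⟨v, hv⟩ : ∃ v : ℝ, v = (1 - ρ - t) / r := ⟨_, rfl⟩
    have hfu : r * u + t = lam + ρ := by rw [hu]; field_simp; ring
    have hfv : r * v + t = 1 - ρ := by rw [hv]; field_simp; ring
    have hvu : v - u = (1 - 2*ρ - lam) / r := by
      rw [hu, hv]; field_simp; ring
    have huv : u < v := by
      have := div_pos hgpos hrpos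
      linarith [hvu]
    have hau : a ≤ u := by
      by_contra hua
      push_neg at hua
      have := mul_lt_mul_of_pos_left hua hrpos
      linarith
    have hbv : v ≤ b := by
      by_contra hvb
      push_neg at hvb
      have := mul_lt_mul_of_pos_left hvb hrpos
      linarith
    have hu0 : 0 ≤ u := le_trans (hAbd a haA).1 hau
    have hvl : v ≤ lam + ρ := le_trans hbv (hAbd b hbA).2
    have hempty : E ∩ Set.Ioo u v = ∅ := by
      rw [Set.eq_empty_iff_forall_notMem]
      rintro x ⟨hxE, hx1, hx2⟩
      have hxA : x ∈ A := hmemA x hxE (by linarith)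
      have hfx := hEloc _ (hfA x hxA)
      have e1 : lam + ρ < r * x + t := by
        have := mul_lt_mul_of_pos_left hx1 hrpos
        linarith
      have e2 : r * x + t < 1 - ρ := by
        have := mul_lt_mul_of_pos_left hx2 hrpos
        linarith
      rcases hfx with h | h <;> linarith
    have hnot : ∀ p ∈ E, v ≤ p ∨ p ≤ u := by
      intro p hp
      rcases le_or_gt v p with h | h
      · exact Or.inl h
      rcases le_or_gt p u with h' | h'
      · exact Or.inr h'
      · exfalso
        have : p ∈ E ∩ Set.Ioo u v := ⟨hp, h', h⟩
        rw [hempty] at this; exact this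
    have hρE : ρ ∈ E := hAE hρA
    have hlamE : lam ∈ E := hAE hlamA
    have hbig : ¬ (r * ρ ≥ 1) := by
      intro hbig
      have hspan : r * (lam + ρ) ≤ 1 := by nlinarith [hf0.1, hf1.2]
      nlinarith [mul_nonneg hrpos.le (by linarith : (0:ℝ) ≤ lam - ρ)]
    have hscaled : ∀ c : ℝ, c ≤ u → v ≤ c + ρ → (∀ x ∈ E, ρ * x + c ∈ E) → False := by
      intro c hcu hvc hmap
      have hgap' : v - u ≤ ρ * (1 - 2*ρ - lam) := by
        have hEmpty2 : E ∩ Set.Ioo ((u - c)/ρ) ((v - c)/ρ) = ∅ := by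
          rw [Set.eq_empty_iff_forall_notMem]
          rintro x ⟨hxE, hx1, hx2⟩
          rw [div_lt_iff₀ hρ0] at hx1
          rw [lt_div_iff₀ hρ0] at hx2
          have : ρ * x + c ∈ E ∩ Set.Ioo u v :=
            ⟨hmap x hxE, by nlinarith, by nlinarith⟩
          rw [hempty] at this; exact this
        have := hgap ((u - c)/ρ) ((v - c)/ρ)
          (div_nonneg (by linarith) hρ0.le)
          (by rw [div_le_one hρ0]; linarith) hEmpty2
        have h2 : (v - c)/ρ - (u - c)/ρ = (v - u)/ρ := by ring
        rw [h2, div_le_iff₀ hρ0] at this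
        nlinarith
      rw [hvu, div_le_iff₀ hrpos] at hgap'
      exact hbig (by nlinarith)
    rcases hnot ρ hρE with hvρ | hρu
    · exact hscaled 0 hu0 (by linarith) (fun x hx => by simpa using hm1 x hx)
    rcases hnot lam hlamE with hvlam | hlamu
    · -- middle gap: r ≤ 1 and r > 1
      have hflam1 : 1 - ρ ≤ r * lam + t := by
        have := mul_le_mul_of_nonneg_left hvlam hrpos.le
        linarith
      have hs1 : r * ρ ≤ ρ := by nlinarith [hf1.2]
      have hs2 : r * (v - u) = 1 - 2*ρ - lam := by
        rw [hvu]
        field_simp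
      have hr1 : r ≤ 1 := le_of_mul_le_mul_right (by rw [one_mul]; exact hs1) hρ0
      have h3 : v - u ≤ lam - ρ := by linarith
      have h4 : r * (v - u) ≤ r * (lam - ρ) := mul_le_mul_of_nonneg_left h3 hrpos.le
      have h5 : r * (lam - ρ) ≤ 1 * (lam - ρ) :=
        mul_le_mul_of_nonneg_right hr1 (by linarith)
      rw [one_mul] at h5
      linarith [hs2]
    · exact hscaled lam hlamu (by linarith) hm2
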